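/- Let D be an edge set with u,v connected in G−D, and let e = (x,y) be an edge of G not in D such that both π(u,x) and π(u,y) contain no edge of D, and e is not a tree edge of T_u (i.e., π(u,y) is not π(u,x) followed by e, and π(u,x) is not π(u,y) followed by e). Then π_{G−D}(u,v) does not traverse e. -/

import Mathlib

open SimpleGraph

variable {V : Type*}

/-- Total weight of a walk with respect to edge weights `w`. -/
def walkWeight (w : Sym2 V → ℝ) {G : SimpleGraph V} {a b : V} (p : G.Walk a b) : ℝ :=
  (p.edges.map w).sum

/-- `p` is the/a minimum-weight path from `a` to `b` in `G`. -/
def IsShortestPath (w : Sym2 V → ℝ) (G : SimpleGraph V) {a b : V} (p : G.Walk a b) : Prop :=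
  p.IsPath ∧ ∀ q : G.Walk a b, q.IsPath → walkWeight w p ≤ walkWeight w q

/-- `Decomposable w G k p` : `p` is the concatenation of at most `k+1` shortest paths
of `G` interleaved with at most `k` single edges. -/
inductive Decomposable (w : Sym2 V → ℝ) (G : SimpleGraph V) :
    ℕ → ∀ {a b : V}, G.Walk a b → Prop
  | single {a b : V} (k : ℕ) (p : G.Walk a b) (hp : IsShortestPath w G p) :
      Decomposable w G k p
  | cons {a b c d : V} (k : ℕ) (p : G.Walk a b) (h : G.Adj b c) (q : G.Walk c d)
      (hp : IsShortestPath w G p) (hq : Decomposable w G k q) :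
      Decomposable w G (k + 1) (p.append (Walk.cons h q))

/-- The rank of a walk `p` in `G`: the least `k` such that `p` is `k`-decomposable. -/
noncomputable def pathRank (w : Sym2 V → ℝ) (G : SimpleGraph V) {a b : V} (p : G.Walk a b) : ℕ :=
  sInf {k | Decomposable w G k p}

/- ### Auxiliary lemmas -/

lemma walk_split_at_edge {G : SimpleGraph V} {x y : V} :
    ∀ {a b : V} (p : G.Walk a b), s(x, y) ∈ p.edges →
    (∃ (q : G.Walk a x) (h : G.Adj x y) (r : G.Walk y b), p = q.append (Walk.cons h r)) ∨
    (∃ (q : G.Walk a y) (h : G.Adj y x) (r : G.Walk x b), p = q.append (Walk.cons h r)) := by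
  intro a b p
  induction p with
  | nil => simp
  | @cons a c b h p ih =>
    intro he
    rw [Walk.edges_cons, List.mem_cons] at he
    rcases he with he | he
    · rw [Sym2.eq_iff] at he
      rcases he with ⟨hx, hy⟩ | ⟨hx, hy⟩
      · subst hx; subst hy
        exact Or.inl ⟨Walk.nil, h, p, rfl⟩
      · subst hx; subst hy
        exact Or.inr ⟨Walk.nil, h, p, rfl⟩
    · rcases ih he with ⟨q, h', r, rfl⟩ | ⟨q, h', r, rfl⟩
      · exact Or.inl ⟨Walk.cons h q, h', r, rfl⟩
      · exact Or.inr ⟨Walk.cons h q, h', r, rfl⟩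

lemma walkWeight_append {G : SimpleGraph V} {a b c : V} (w : Sym2 V → ℝ)
    (p : G.Walk a b) (q : G.Walk b c) :
    walkWeight w (p.append q) = walkWeight w p + walkWeight w q := by
  simp [walkWeight, Walk.edges_append]

lemma walkWeight_bypass_le {G : SimpleGraph V} [DecidableEq V] {a b : V} (w : Sym2 V → ℝ)
    (hw : ∀ e ∈ G.edgeSet, 0 ≤ w e) (p : G.Walk a b) :
    walkWeight w p.bypass ≤ walkWeight w p := by
  obtain ⟨l, hperm, hsub⟩ :=
    (p.bypass_isPath.edges_nodup).subperm p.edges_bypass_subset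
  calc walkWeight w p.bypass = (l.map w).sum := ((hperm.map w).sum_eq).symm
    _ ≤ (p.edges.map w).sum := by
        refine List.Sublist.sum_le_sum (hsub.map w) ?_
        intro t ht
        obtain ⟨e, he, rfl⟩ := List.mem_map.mp ht
        exact hw e (p.edges_subset_edgeSet he)
    _ = walkWeight w p := rfl

lemma prefix_shortest {G : SimpleGraph V} [DecidableEq V] {w : Sym2 V → ℝ}
    (hw : ∀ e ∈ G.edgeSet, 0 ≤ w e) {a b c : V} (q : G.Walk a b) (r : G.Walk b c)
    (h : IsShortestPath w G (q.append r)) : IsShortestPath w G q := by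
  refine ⟨h.1.of_append_left, fun q' hq' => ?_⟩
  by_contra hlt
  push_neg at hlt
  have h1 : walkWeight w ((q'.append r).bypass) < walkWeight w (q.append r) := by
    calc walkWeight w ((q'.append r).bypass) ≤ walkWeight w (q'.append r) :=
          walkWeight_bypass_le w hw _
      _ = walkWeight w q' + walkWeight w r := walkWeight_append w q' r
      _ < walkWeight w q + walkWeight w r := by linarith
      _ = walkWeight w (q.append r) := (walkWeight_append w q r).symm
  exact absurd (h.2 _ ((q'.append r).bypass_isPath)) (not_le.mpr h1)

lemma shortest_transfer {G : SimpleGraph V} {w : Sym2 V → ℝ} {D : Set (Sym2 V)}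
    {a b : V} (p : G.Walk a b) (hp : IsShortestPath w G p)
    (hsub : ∀ e ∈ p.edges, e ∈ (G.deleteEdges D).edgeSet) :
    IsShortestPath w (G.deleteEdges D) (p.transfer _ hsub) := by
  refine ⟨hp.1.transfer hsub, fun q hq => ?_⟩
  have hqe : ∀ e ∈ q.edges, e ∈ G.edgeSet := fun e he =>
    edgeSet_mono (G.deleteEdges_le D) (q.edges_subset_edgeSet he)
  have h1 : walkWeight w (p.transfer _ hsub) = walkWeight w p := by
    simp [walkWeight]
  have h2 : walkWeight w (q.transfer G hqe) = walkWeight w q := by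
    simp [walkWeight]
  rw [h1, ← h2]
  exact hp.2 _ (hq.transfer hqe)

lemma my_transfer_self {G : SimpleGraph V} {a b : V} (p : G.Walk a b)
    (h : ∀ e ∈ p.edges, e ∈ G.edgeSet) : p.transfer G h = p :=
  p.transfer_self

lemma transfer_concat' {G H : SimpleGraph V} {a b c : V} (p : G.Walk a b) (h : G.Adj b c)
    (hs : ∀ e ∈ (p.concat h).edges, e ∈ H.edgeSet)
    (hp : ∀ e ∈ p.edges, e ∈ H.edgeSet) (h' : H.Adj b c) :
    (p.concat h).transfer H hs = (p.transfer H hp).concat h' := by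
  simp only [Walk.concat_eq_append, Walk.transfer_append]
  rfl

/-- Key step: if a shortest path in `G − D` starts with `q : u → x` followed by the
edge `(x,y)`, and `π(u,x)`, `π(u,y)` avoid `D`, then `π(u,y) = π(u,x).concat`. -/
lemma tree_edge_of_shortest {G : SimpleGraph V} [DecidableEq V] {w : Sym2 V → ℝ}
    (hw : ∀ e ∈ G.edgeSet, 0 ≤ w e)
    (πG : ∀ a b : V, G.Walk a b) (hπG : ∀ a b : V, IsShortestPath w G (πG a b))
    {D : Set (Sym2 V)}
    (huniqD : ∀ (a b : V) (p q : (G.deleteEdges D).Walk a b),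
      IsShortestPath w (G.deleteEdges D) p → IsShortestPath w (G.deleteEdges D) q → p = q)
    {u x y v : V} (q : (G.deleteEdges D).Walk u x) (h : (G.deleteEdges D).Adj x y)
    (r : (G.deleteEdges D).Walk y v)
    (hP : IsShortestPath w (G.deleteEdges D) (q.append (Walk.cons h r)))
    (hadj : G.Adj x y)
    (hux : ∀ e ∈ (πG u x).edges, e ∉ D) (huy : ∀ e ∈ (πG u y).edges, e ∉ D) :
    πG u y = (πG u x).concat hadj := by
  have hle : G.deleteEdges D ≤ G := G.deleteEdges_le D
  have hw0' : ∀ e ∈ (G.deleteEdges D).edgeSet, 0 ≤ w e := fun e he =>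
    hw e (edgeSet_mono hle he)
  have hQ : IsShortestPath w (G.deleteEdges D) q :=
    prefix_shortest hw0' q (Walk.cons h r) hP
  have hQy : IsShortestPath w (G.deleteEdges D) (q.concat h) :=
    prefix_shortest hw0' (q.concat h) r (by rwa [Walk.concat_append])
  have hsubx : ∀ e ∈ (πG u x).edges, e ∈ (G.deleteEdges D).edgeSet := fun e he => by
    rw [edgeSet_deleteEdges]
    exact ⟨(πG u x).edges_subset_edgeSet he, hux e he⟩
  have hsuby : ∀ e ∈ (πG u y).edges, e ∈ (G.deleteEdges D).edgeSet := fun e he => by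
    rw [edgeSet_deleteEdges]
    exact ⟨(πG u y).edges_subset_edgeSet he, huy e he⟩
  have heqx : q = (πG u x).transfer _ hsubx :=
    huniqD u x q _ hQ (shortest_transfer _ (hπG u x) hsubx)
  have heqy : q.concat h = (πG u y).transfer _ hsuby :=
    huniqD u y (q.concat h) _ hQy (shortest_transfer _ (hπG u y) hsuby)
  have hqs : ∀ e ∈ q.edges, e ∈ G.edgeSet := fun e he =>
    edgeSet_mono hle (q.edges_subset_edgeSet he)
  have hqx : q.transfer G hqs = πG u x := by
    have h1 := congrArg (fun (p : (G.deleteEdges D).Walk u x) =>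
      p.transfer G (fun e he => edgeSet_mono hle (p.edges_subset_edgeSet he))) heqx
    rw [Walk.transfer_transfer, my_transfer_self] at h1
    exact h1
  have h2 := congrArg (fun (p : (G.deleteEdges D).Walk u y) =>
    p.transfer G (fun e he => edgeSet_mono hle (p.edges_subset_edgeSet he))) heqy
  rw [Walk.transfer_transfer, my_transfer_self] at h2
  calc πG u y = (q.concat h).transfer G _ := h2.symm
    _ = (q.transfer G hqs).concat hadj := transfer_concat' q h _ hqs hadj
    _ = (πG u x).concat hadj := by rw [hqx]

/-- Case 2.4.  Let `e = (x,y)` be an edge of `G` not in `D` such that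
both `π(u,x)` and `π(u,y)` contain no edge of `D`, and `e` is not a tree edge of `T_u`.
Then `π_{G−D}(u,v)` does not traverse `e`. -/
theorem stmt10 [Fintype V] [DecidableEq V] (G : SimpleGraph V) (w : Sym2 V → ℝ)
    (hw : ∀ e ∈ G.edgeSet, 0 < w e)
    (πG : ∀ a b : V, G.Walk a b) (hπG : ∀ a b : V, IsShortestPath w G (πG a b))
    (huniqG : ∀ (a b : V) (p q : G.Walk a b),
      IsShortestPath w G p → IsShortestPath w G q → p = q)
    (D : Set (Sym2 V)) (hDsub : D ⊆ G.edgeSet)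
    (huniqD : ∀ (a b : V) (p q : (G.deleteEdges D).Walk a b),
      IsShortestPath w (G.deleteEdges D) p → IsShortestPath w (G.deleteEdges D) q → p = q)
    (u v : V)
    (P : (G.deleteEdges D).Walk u v) (hP : IsShortestPath w (G.deleteEdges D) P)
    (x y : V) (hadj : G.Adj x y) (heD : s(x, y) ∉ D)
    -- π(u,x) and π(u,y) contain no edge of D
    (hux : ∀ e ∈ (πG u x).edges, e ∉ D) (huy : ∀ e ∈ (πG u y).edges, e ∉ D)
    -- (x,y) is not a tree edge of T_u
    (hnt1 : πG u y ≠ (πG u x).concat hadj)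
    (hnt2 : πG u x ≠ (πG u y).concat hadj.symm) :
    s(x, y) ∉ P.edges := by
  intro hmem
  have hw0 : ∀ e ∈ G.edgeSet, 0 ≤ w e := fun e he => (hw e he).le
  rcases walk_split_at_edge P hmem with ⟨q, h, r, hPeq⟩ | ⟨q, h, r, hPeq⟩
  · subst hPeq
    exact hnt1 (tree_edge_of_shortest hw0 πG hπG huniqD q h r hP hadj hux huy)
  · subst hPeq
    exact hnt2 (tree_edge_of_shortest hw0 πG hπG huniqD q h r hP hadj.symm huy hux)
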